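/- arXiv:1110.2529 — 3 statements merged into one kernel-verified Lean document; each statement's English description precedes it below -/
import Mathlib

section
/- Let w(1),...,w(n) ∈ W be the iterates of an online algorithm satisfying the regret bound Σ_{t=1}^n [F(w(t); ξ_t) - F(w*; ξ_t)] ≤ R_n for a fixed w* ∈ W, and the stability bound ‖w(t) - w(t+1)‖ ≤ κ(t) with κ non-increasing. Assume F(·;ξ) is G-Lipschitz in ‖·‖ and F(w;ξ) ∈ [0, GR]. Then for any τ ∈ ℕ, Σ_{t=1}^n [f(w(t)) - f(w*)] ≤ R_n + G τ Σ_{t=1}^n κ(t) + 2τ G R + Σ_{t=1}^n [f(w(t)) - F(w(t); ξ_{t+τ}) + F(w*; ξ_{t+τ}) - f(w*)]. -/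
open Finset

/-- Proposition 2 (the master inequality): deterministic decomposition of the
excess stationary risk of the iterates in terms of regret, stability, and a
remainder term. -/
theorem stmt_4 {E Ξ : Type*} [NormedAddCommGroup E]
    (W : Set E) (F : E → Ξ → ℝ) (f : E → ℝ)
    (G R : ℝ) (hG : 0 ≤ G) (hR : 0 ≤ R)
    (w : ℕ → E) (hw : ∀ t, w t ∈ W)
    (ξ : ℕ → Ξ) (wstar : E) (hwstar : wstar ∈ W)
    (n : ℕ) (Rn : ℝ) (κ : ℕ → ℝ)
    -- regret bound:
    (hregret : ∑ t ∈ Finset.Icc 1 n, (F (w t) (ξ t) - F wstar (ξ t)) ≤ Rn)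
    -- stability with non-increasing κ:
    (hstab : ∀ t, ‖w t - w (t + 1)‖ ≤ κ t)
    (hκ : ∀ s t : ℕ, s ≤ t → κ t ≤ κ s)
    -- Lipschitz continuity and boundedness of the loss:
    (hlip : ∀ u v : E, u ∈ W → v ∈ W → ∀ x : Ξ, |F u x - F v x| ≤ G * ‖u - v‖)
    (hbound : ∀ u : E, u ∈ W → ∀ x : Ξ, F u x ∈ Set.Icc 0 (G * R))
    (τ : ℕ) :
    ∑ t ∈ Finset.Icc 1 n, (f (w t) - f wstar)
      ≤ Rn + G * τ * ∑ t ∈ Finset.Icc 1 n, κ t + 2 * τ * G * R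
        + ∑ t ∈ Finset.Icc 1 n,
            (f (w t) - F (w t) (ξ (t + τ)) + F wstar (ξ (t + τ)) - f wstar) := by
  have hκ0 : ∀ t, 0 ≤ κ t := fun t => le_trans (norm_nonneg _) (hstab t)
  -- distance bound
  have hdist : ∀ t k : ℕ, ‖w t - w (t + k)‖ ≤ (k : ℝ) * κ t := by
    intro t k
    induction k with
    | zero => simp
    | succ k ih =>
      have h1 : ‖w t - w (t + (k+1))‖ ≤ ‖w t - w (t+k)‖ + ‖w (t+k) - w (t+k+1)‖ := by
        have := norm_sub_le_norm_sub_add_norm_sub (w t) (w (t+k)) (w (t+k+1))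
        simpa [add_assoc] using this
      have h2 : κ (t+k) ≤ κ t := hκ t (t+k) (Nat.le_add_right _ _)
      have := h1.trans (add_le_add ih ((hstab (t+k)).trans h2))
      calc ‖w t - w (t + (k+1))‖ ≤ (k:ℝ) * κ t + κ t := by
            simpa [add_assoc] using this
        _ = ((k+1 : ℕ) : ℝ) * κ t := by push_cast; ring
  set g : ℕ → ℝ := fun t => F (w t) (ξ t) - F wstar (ξ t) with hg
  have hgub : ∀ t, g t ≤ G * R := by
    intro t
    have h1 := (hbound (w t) (hw t) (ξ t)).2
    have h2 := (hbound wstar hwstar (ξ t)).1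
    simp only [hg]; linarith
  have hglb : ∀ t, -(G * R) ≤ g t := by
    intro t
    have h1 := (hbound (w t) (hw t) (ξ t)).1
    have h2 := (hbound wstar hwstar (ξ t)).2
    simp only [hg]; linarith
  -- Step C: shifted regret bound
  have hshift : ∑ t ∈ Finset.Icc 1 n, g (t + τ) = ∑ t ∈ Finset.Ioc τ (n + τ), g t := by
    rw [show Finset.Icc 1 n = Finset.Ioc 0 n from (Finset.Icc_add_one_left_eq_Ioc 0 n)]
    rw [show Finset.Ioc τ (n + τ) = Finset.map (addRightEmbedding τ) (Finset.Ioc 0 n) by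
      rw [Finset.map_add_right_Ioc]; simp]
    rw [Finset.sum_map]
    simp [addRightEmbedding]
  have hsplit1 : ∑ t ∈ Finset.Ioc 0 τ, g t + ∑ t ∈ Finset.Ioc τ (n + τ), g t
      = ∑ t ∈ Finset.Ioc 0 (n + τ), g t :=
    Finset.sum_Ioc_consecutive g (Nat.zero_le τ) (Nat.le_add_left τ n)
  have hsplit2 : ∑ t ∈ Finset.Ioc 0 n, g t + ∑ t ∈ Finset.Ioc n (n + τ), g t
      = ∑ t ∈ Finset.Ioc 0 (n + τ), g t :=
    Finset.sum_Ioc_consecutive g (Nat.zero_le n) (Nat.le_add_right n τ)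
  have hc1 : ∑ t ∈ Finset.Ioc n (n + τ), g t ≤ (τ : ℝ) * (G * R) := by
    have := Finset.sum_le_card_nsmul (Finset.Ioc n (n + τ)) g (G * R)
      (fun t _ => hgub t)
    simpa [Nat.card_Ioc, nsmul_eq_mul] using this
  have hc2 : -((τ : ℝ) * (G * R)) ≤ ∑ t ∈ Finset.Ioc 0 τ, g t := by
    have := Finset.card_nsmul_le_sum (Finset.Ioc 0 τ) g (-(G * R))
      (fun t _ => hglb t)
    simpa [Nat.card_Ioc, nsmul_eq_mul] using this
  have hreg' : ∑ t ∈ Finset.Ioc 0 n, g t ≤ Rn := by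
    rw [← Finset.Icc_add_one_left_eq_Ioc 0 n]; exact hregret
  have hC : ∑ t ∈ Finset.Icc 1 n, g (t + τ) ≤ Rn + 2 * τ * G * R := by
    rw [hshift]
    nlinarith [hc1, hc2, hreg', hsplit1, hsplit2]
  -- Step B
  have hB : ∑ t ∈ Finset.Icc 1 n, (F (w t) (ξ (t + τ)) - F wstar (ξ (t + τ)))
      ≤ G * τ * ∑ t ∈ Finset.Icc 1 n, κ t + ∑ t ∈ Finset.Icc 1 n, g (t + τ) := by
    rw [Finset.mul_sum, ← Finset.sum_add_distrib]
    refine Finset.sum_le_sum fun t _ => ?_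
    have h1 : |F (w t) (ξ (t + τ)) - F (w (t + τ)) (ξ (t + τ))| ≤ G * ‖w t - w (t + τ)‖ :=
      hlip _ _ (hw t) (hw (t + τ)) _
    have h2 : G * ‖w t - w (t + τ)‖ ≤ G * ((τ : ℝ) * κ t) :=
      mul_le_mul_of_nonneg_left (hdist t τ) hG
    have h3 := (le_abs_self _).trans (h1.trans h2)
    simp only [hg]
    linarith
  -- combine
  have hA : ∑ t ∈ Finset.Icc 1 n, (f (w t) - f wstar)
      = ∑ t ∈ Finset.Icc 1 n,
          (f (w t) - F (w t) (ξ (t + τ)) + F wstar (ξ (t + τ)) - f wstar)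
        + ∑ t ∈ Finset.Icc 1 n, (F (w t) (ξ (t + τ)) - F wstar (ξ (t + τ))) := by
    rw [← Finset.sum_add_distrib]
    exact Finset.sum_congr rfl fun t _ => by ring
  rw [hA]
  linarith [hB, hC]
end

section
/- Let X_1,...,X_n be a martingale difference sequence adapted to a filtration (F_t) with |X_t| ≤ b a.s., and let V = Σ_{t=1}^n E[X_t² | F_{t-1}]. Then for any δ < 1/e and n ≥ 3, P( Σ_{t=1}^n X_t ≥ max{2√V, 3b√(log(1/δ))} · √(log(1/δ)) ) ≤ 4 δ log n. -/
open MeasureTheory Finset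

lemma fact_ge (n : ℕ) : (2:ℝ) * 3 ^ n ≤ (Nat.factorial (n + 2) : ℝ) := by
  induction n with
  | zero => norm_num [Nat.factorial]
  | succ k ih =>
      have h : Nat.factorial (k + 3) = (k + 3) * Nat.factorial (k + 2) := rfl
      have h2 : ((3:ℝ)) * (2 * 3 ^ k) ≤ (k + 3) * Nat.factorial (k + 2) := by
        apply mul_le_mul (by norm_num) ih (by positivity) (by positivity)
      calc (2:ℝ) * 3 ^ (k + 1) = 3 * (2 * 3 ^ k) := by ring
        _ ≤ (k + 3) * Nat.factorial (k + 2) := h2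
        _ = (Nat.factorial (k + 1 + 2) : ℝ) := by
            rw [show k + 1 + 2 = k + 3 from rfl, h]; push_cast; ring

lemma exp_le_aux {y c : ℝ} (hy : |y| ≤ c) (hc : c < 3) :
    Real.exp y ≤ 1 + y + y ^ 2 / (2 * (1 - c / 3)) := by
  have hc0 : 0 ≤ c := le_trans (abs_nonneg y) hy
  have hr0 : 0 ≤ c / 3 := by linarith
  have hr1 : c / 3 < 1 := by linarith
  have hsum : Summable (fun m : ℕ => y ^ (m + 2) / (Nat.factorial (m + 2) : ℝ)) := by
    simpa [Function.comp_def] using (Real.summable_pow_div_factorial y).comp_injective (add_left_injective 2)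
  have hgeom : Summable (fun m : ℕ => y ^ 2 / 2 * (c / 3) ^ m) :=
    (summable_geometric_of_lt_one hr0 hr1).mul_left _
  have hterm : ∀ m : ℕ, y ^ (m + 2) / (Nat.factorial (m + 2) : ℝ)
      ≤ y ^ 2 / 2 * (c / 3) ^ m := by
    intro m
    have h1 : |y ^ (m + 2)| = y ^ 2 * |y| ^ m := by
      rw [abs_pow, pow_add, sq_abs]; ring
    have hfac : (2:ℝ) * 3 ^ m ≤ (Nat.factorial (m + 2) : ℝ) := fact_ge m
    have hfacpos : (0:ℝ) < (Nat.factorial (m + 2) : ℝ) := by positivity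
    refine le_trans (le_abs_self _) ?_
    rw [abs_div, abs_of_pos hfacpos, h1, div_le_iff₀ hfacpos]
    have h2 : y ^ 2 * |y| ^ m ≤ y ^ 2 * c ^ m :=
      mul_le_mul_of_nonneg_left (pow_le_pow_left₀ (abs_nonneg y) hy m) (sq_nonneg y)
    calc y ^ 2 * |y| ^ m ≤ y ^ 2 * c ^ m := h2
      _ = (y ^ 2 / 2 * (c / 3) ^ m) * (2 * 3 ^ m) := by
          field_simp; rw [mul_assoc, ← mul_pow, div_mul_cancel₀ c (by norm_num : (3:ℝ) ≠ 0)]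
      _ ≤ (y ^ 2 / 2 * (c / 3) ^ m) * (Nat.factorial (m + 2) : ℝ) := by
          apply mul_le_mul_of_nonneg_left hfac (by positivity)
  have htail : Real.exp y - 1 - y = ∑' m : ℕ, y ^ (m + 2) / (Nat.factorial (m + 2) : ℝ) := by
    have hser : Real.exp y = ∑' m : ℕ, y ^ m / (Nat.factorial m : ℝ) := by
      rw [Real.exp_eq_exp_ℝ, NormedSpace.exp_eq_tsum_div]
    have h0 := (Real.summable_pow_div_factorial y)
    have h1 : Summable (fun m : ℕ => y ^ (m + 1) / (Nat.factorial (m + 1) : ℝ)) := by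
      simpa [Function.comp_def] using h0.comp_injective (add_left_injective 1)
    rw [hser, Summable.tsum_eq_zero_add h0, Summable.tsum_eq_zero_add h1]
    simp [Nat.factorial]
  have hbound : ∑' m : ℕ, y ^ (m + 2) / (Nat.factorial (m + 2) : ℝ)
      ≤ y ^ 2 / 2 * (1 - c / 3)⁻¹ := by
    calc ∑' m : ℕ, y ^ (m + 2) / (Nat.factorial (m + 2) : ℝ)
        ≤ ∑' m : ℕ, y ^ 2 / 2 * (c / 3) ^ m := Summable.tsum_le_tsum hterm hsum hgeom
      _ = y ^ 2 / 2 * (1 - c / 3)⁻¹ := by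
          rw [tsum_mul_left, tsum_geometric_of_lt_one hr0 hr1]
  have heq : y ^ 2 / 2 * (1 - c / 3)⁻¹ = y ^ 2 / (2 * (1 - c / 3)) := by
    field_simp
  linarith



section
variable {Ω : Type*} {m0 : MeasurableSpace Ω} (μ : Measure Ω) [IsProbabilityMeasure μ]
  (ℱ : MeasureTheory.Filtration ℕ m0) (X : ℕ → Ω → ℝ) (b : ℝ)

lemma mgf_le (hb : 0 < b)
    (hadapted : ∀ t, StronglyMeasurable[ℱ t] (X t))
    (hint : ∀ t, Integrable (X t) μ)
    (hmds : ∀ t, 1 ≤ t → μ[X t|ℱ (t - 1)] =ᵐ[μ] fun _ => (0 : ℝ))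
    (hbdd : ∀ t, ∀ᵐ ω ∂μ, |X t ω| ≤ b)
    (σ2 : ℕ → Ω → ℝ)
    (hσ2 : ∀ t, σ2 t = μ[fun ω' => (X t ω') ^ 2|ℱ (t - 1)])
    (l : ℝ) (hl : 0 ≤ l) (hlb : l * b < 3) (k : ℕ) :
    ∫ ω, Real.exp (l * (∑ t ∈ Icc 1 k, X t ω)
      - (l ^ 2 / (2 * (1 - l * b / 3))) * (∑ t ∈ Icc 1 k, σ2 t ω)) ∂μ ≤ 1 := by
  set g : ℝ := l ^ 2 / (2 * (1 - l * b / 3)) with hg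
  have hD : 0 < 1 - l * b / 3 := by linarith
  have hg0 : 0 ≤ g := by positivity
  -- basic measurability
  have hXm : ∀ t, StronglyMeasurable[m0] (X t) := fun t => (hadapted t).mono (ℱ.le t)
  have hσm : ∀ t, StronglyMeasurable[ℱ (t - 1)] (σ2 t) := by
    intro t; rw [hσ2]; exact stronglyMeasurable_condExp
  have hσm0 : ∀ t, StronglyMeasurable[m0] (σ2 t) := fun t => (hσm t).mono (ℱ.le _)
  have hX2int : ∀ t, Integrable (fun ω => (X t ω) ^ 2) μ := by
    intro t
    refine Integrable.mono' (integrable_const (b ^ 2))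
      ((hXm t).measurable.pow_const 2).aestronglyMeasurable ?_
    filter_upwards [hbdd t] with ω hω
    rw [Real.norm_eq_abs, abs_of_nonneg (sq_nonneg _), ← sq_abs]
    exact pow_le_pow_left₀ (abs_nonneg _) hω 2
  have hσb : ∀ t, ∀ᵐ ω ∂μ, 0 ≤ σ2 t ω ∧ σ2 t ω ≤ b ^ 2 := by
    intro t
    have h1 : (0:Ω→ℝ) ≤ᵐ[μ] σ2 t := by
      rw [hσ2]; exact condExp_nonneg (Filter.Eventually.of_forall fun ω => sq_nonneg _)
    have h2 : σ2 t ≤ᵐ[μ] fun _ => b ^ 2 := by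
      rw [hσ2]
      refine (condExp_mono (g := fun _ => b ^ 2) (hX2int t) (integrable_const _) ?_).trans ?_
      · filter_upwards [hbdd t] with ω hω
        rw [← sq_abs]; exact pow_le_pow_left₀ (abs_nonneg _) hω 2
      · rw [condExp_const (ℱ.le _)]
    filter_upwards [h1, h2] with ω e1 e2; exact ⟨e1, e2⟩
  -- global a.e. bounds
  have hball : ∀ᵐ ω ∂μ, ∀ t, |X t ω| ≤ b := ae_all_iff.2 hbdd
  have hσall : ∀ᵐ ω ∂μ, ∀ t, 0 ≤ σ2 t ω ∧ σ2 t ω ≤ b ^ 2 := ae_all_iff.2 hσb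
  induction k with
  | zero => simp
  | succ k ih =>
    -- notation
    set S : Ω → ℝ := fun ω => ∑ t ∈ Icc 1 k, X t ω with hS
    set Vk : Ω → ℝ := fun ω => ∑ t ∈ Icc 1 k, σ2 t ω with hVk
    have hSm : StronglyMeasurable[ℱ k] S := by
      refine Finset.stronglyMeasurable_fun_sum _ fun t ht => ?_
      exact (hadapted t).mono (ℱ.mono (mem_Icc.1 ht).2)
    have hVm : StronglyMeasurable[ℱ k] Vk := by
      refine Finset.stronglyMeasurable_fun_sum _ fun t ht => ?_
      have htk := (mem_Icc.1 ht).2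
      exact (hσm t).mono (ℱ.mono (by omega : t - 1 ≤ k))
    have hσk1m : StronglyMeasurable[ℱ k] (σ2 (k+1)) := by
      have := hσm (k+1); simpa using this
    set Y : Ω → ℝ := fun ω => Real.exp (l * S ω - g * (Vk ω + σ2 (k+1) ω)) with hY
    set Z : Ω → ℝ := fun ω => Real.exp (l * X (k+1) ω) with hZ
    have hYm : StronglyMeasurable[ℱ k] Y := by
      refine (Measurable.stronglyMeasurable ?_)
      exact (((hSm.measurable.const_mul l).sub
        ((hVm.measurable.add hσk1m.measurable).const_mul g))).exp
    have hYm0 : StronglyMeasurable[m0] Y := hYm.mono (ℱ.le k)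
    have hZm0 : StronglyMeasurable[m0] Z :=
      (((hXm (k+1)).measurable.const_mul l).exp).stronglyMeasurable
    -- a.e. bounds on Y, Z
    have hYb : ∀ᵐ ω ∂μ, 0 ≤ Y ω ∧ Y ω ≤ Real.exp (l * (k * b)) := by
      filter_upwards [hball, hσall] with ω h1 h2
      refine ⟨(Real.exp_pos _).le, Real.exp_le_exp.2 ?_⟩
      have hSle : S ω ≤ k * b := by
        calc S ω ≤ ∑ t ∈ Icc 1 k, b := by
              exact Finset.sum_le_sum fun t _ => (abs_le.1 (h1 t)).2
          _ = k * b := by rw [Finset.sum_const, Nat.card_Icc]; simp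
      have hVnn : 0 ≤ Vk ω + σ2 (k+1) ω := by
        have : 0 ≤ Vk ω := Finset.sum_nonneg fun t _ => (h2 t).1
        linarith [(h2 (k+1)).1]
      nlinarith [mul_le_mul_of_nonneg_left hSle hl, mul_nonneg hg0 hVnn]
    have hZb : ∀ᵐ ω ∂μ, |Z ω| ≤ Real.exp (l * b) := by
      filter_upwards [hbdd (k+1)] with ω hω
      rw [abs_of_pos (Real.exp_pos _)]
      exact Real.exp_le_exp.2 (by nlinarith [(abs_le.1 hω).2, (abs_le.1 hω).1])
    have hZint : Integrable Z μ :=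
      Integrable.mono' (integrable_const _) hZm0.aestronglyMeasurable hZb
    have hYZint : Integrable (fun ω => Y ω * Z ω) μ := by
      refine Integrable.mono' (integrable_const (Real.exp (l * (k * b)) * Real.exp (l * b)))
        (hYm0.mul hZm0).aestronglyMeasurable ?_
      filter_upwards [hYb, hZb] with ω h1 h2
      rw [Real.norm_eq_abs, abs_mul, abs_of_nonneg h1.1]
      exact mul_le_mul h1.2 h2 (abs_nonneg _) (Real.exp_pos _).le
    -- rewrite the goal integrand as Y * Z
    have hsplit : (fun ω => Real.exp (l * (∑ t ∈ Icc 1 (k+1), X t ω)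
        - g * (∑ t ∈ Icc 1 (k+1), σ2 t ω))) = fun ω => Y ω * Z ω := by
      funext ω
      rw [Finset.sum_Icc_succ_top (by omega : 1 ≤ k + 1),
        Finset.sum_Icc_succ_top (by omega : 1 ≤ k + 1), hY, hZ, ← Real.exp_add]
      simp only [hS, hVk]; ring_nf
    rw [hsplit]
    -- tower property
    have htower : ∫ ω, Y ω * Z ω ∂μ = ∫ ω, Y ω * (μ[Z|ℱ k]) ω ∂μ := by
      calc ∫ ω, Y ω * Z ω ∂μ
          = ∫ ω, (μ[fun ω' => Y ω' * Z ω'|ℱ k]) ω ∂μ :=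
            (integral_condExp (ℱ.le k)).symm
        _ = ∫ ω, Y ω * (μ[Z|ℱ k]) ω ∂μ := by
            refine integral_congr_ae ?_
            exact condExp_mul_of_stronglyMeasurable_left hYm hYZint hZint
    rw [htower]
    -- bound the conditional expectation of Z
    set W : Ω → ℝ := fun ω => 1 + l * X (k+1) ω + g * (X (k+1) ω) ^ 2 with hW
    have hWint : Integrable W μ := by
      refine (Integrable.add ?_ ?_)
      · exact (integrable_const 1).add ((hint (k+1)).const_mul l)
      · exact (hX2int (k+1)).const_mul g
    have hZW : Z ≤ᵐ[μ] W := by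
      filter_upwards [hbdd (k+1)] with ω hω
      have hy : |l * X (k+1) ω| ≤ l * b := by
        rw [abs_mul, abs_of_nonneg hl]
        exact mul_le_mul_of_nonneg_left hω hl
      have := exp_le_aux hy hlb
      have heq : (l * X (k+1) ω) ^ 2 / (2 * (1 - l * b / 3)) = g * (X (k+1) ω) ^ 2 := by
        rw [hg]; ring
      rw [hZ, hW]
      dsimp only
      rw [← heq]
      linarith [this]
    have hcondW : μ[W|ℱ k] =ᵐ[μ] fun ω => 1 + g * σ2 (k+1) ω := by
      have e1 : μ[W|ℱ k] =ᵐ[μ] μ[fun ω => 1 + l * X (k+1) ω|ℱ k]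
          + μ[fun ω => g * (X (k+1) ω)^2|ℱ k] :=
        condExp_add ((integrable_const 1).add ((hint (k+1)).const_mul l))
          ((hX2int (k+1)).const_mul g) (ℱ k)
      have e2 : μ[fun ω => 1 + l * X (k+1) ω|ℱ k] =ᵐ[μ]
          (fun _ => (1:ℝ)) + μ[fun ω => l * X (k+1) ω|ℱ k] := by
        have := condExp_add (μ := μ) (m := ℱ k) (integrable_const (1:ℝ))
          ((hint (k+1)).const_mul l)
        refine this.trans ?_
        rw [condExp_const (ℱ.le k)]
      have e3 : μ[fun ω => l * X (k+1) ω|ℱ k] =ᵐ[μ] fun _ => (0:ℝ) := by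
        have hs : μ[fun ω => l * X (k+1) ω|ℱ k] =ᵐ[μ] l • μ[X (k+1)|ℱ k] := by
          simpa [Pi.smul_def, smul_eq_mul] using condExp_smul (μ := μ) (m := ℱ k) l (X (k+1))
        refine hs.trans ?_
        have := hmds (k+1) (by omega)
        simp only [Nat.add_sub_cancel] at this
        filter_upwards [this] with ω hω
        simp [hω]
      have e4 : μ[fun ω => g * (X (k+1) ω)^2|ℱ k] =ᵐ[μ] fun ω => g * σ2 (k+1) ω := by
        have hs : μ[fun ω => g * (X (k+1) ω)^2|ℱ k] =ᵐ[μ]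
            g • μ[fun ω => (X (k+1) ω)^2|ℱ k] := by
          simpa [Pi.smul_def, smul_eq_mul] using
            condExp_smul (μ := μ) (m := ℱ k) g (fun ω => (X (k+1) ω)^2)
        refine hs.trans ?_
        have : σ2 (k+1) = μ[fun ω' => (X (k+1) ω') ^ 2|ℱ k] := by
          have := hσ2 (k+1); simpa using this
        rw [this]
        rfl
      filter_upwards [e1, e2, e3, e4] with ω h1 h2 h3 h4
      simp only [Pi.add_apply] at h1 h2 ⊢
      rw [h1, h2, h3, h4]
      ring
    have hZcond_le : μ[Z|ℱ k] ≤ᵐ[μ] fun ω => Real.exp (g * σ2 (k+1) ω) := by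
      have h1 : μ[Z|ℱ k] ≤ᵐ[μ] μ[W|ℱ k] := condExp_mono hZint hWint hZW
      filter_upwards [h1, hcondW] with ω e1 e2
      calc (μ[Z|ℱ k]) ω ≤ (μ[W|ℱ k]) ω := e1
        _ = 1 + g * σ2 (k+1) ω := e2
        _ ≤ Real.exp (g * σ2 (k+1) ω) := by
            linarith [Real.add_one_le_exp (g * σ2 (k+1) ω)]
    -- conclude
    have hcond_nonneg : ∀ᵐ ω ∂μ, 0 ≤ (μ[Z|ℱ k]) ω :=
      condExp_nonneg (Filter.Eventually.of_forall fun ω => (Real.exp_pos _).le)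
    have hcond_bd : ∀ᵐ ω ∂μ, (μ[Z|ℱ k]) ω ≤ Real.exp (l * b) := by
      have h1 : μ[Z|ℱ k] ≤ᵐ[μ] μ[fun _ => Real.exp (l * b)|ℱ k] := by
        refine condExp_mono hZint (integrable_const _) ?_
        filter_upwards [hZb] with ω hω
        exact (abs_le.1 hω).2
      filter_upwards [h1] with ω hω
      rw [condExp_const (ℱ.le k)] at hω
      exact hω
    have hfin : ∫ ω, Y ω * (μ[Z|ℱ k]) ω ∂μ
        ≤ ∫ ω, Real.exp (l * S ω - g * Vk ω) ∂μ := by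
      refine integral_mono_ae ?_ ?_ ?_
      · refine Integrable.mono' (integrable_const (Real.exp (l * (k * b)) * Real.exp (l * b)))
          (hYm0.mul (stronglyMeasurable_condExp.mono (ℱ.le k))).aestronglyMeasurable ?_
        filter_upwards [hYb, hcond_nonneg, hcond_bd] with ω h1 h2 h3
        rw [Real.norm_eq_abs, abs_mul, abs_of_nonneg h1.1, abs_of_nonneg h2]
        exact mul_le_mul h1.2 h3 h2 (Real.exp_pos _).le
      · refine Integrable.mono' (integrable_const (Real.exp (l * (k * b))))
          ((((hSm.mono (ℱ.le k)).measurable.const_mul l).sub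
            ((hVm.mono (ℱ.le k)).measurable.const_mul g)).exp).stronglyMeasurable.aestronglyMeasurable ?_
        filter_upwards [hball, hσall] with ω h1 h2
        rw [Real.norm_eq_abs, abs_of_pos (Real.exp_pos _)]
        refine Real.exp_le_exp.2 ?_
        have hSle : S ω ≤ k * b := by
          calc S ω ≤ ∑ t ∈ Icc 1 k, b := Finset.sum_le_sum fun t _ => (abs_le.1 (h1 t)).2
            _ = k * b := by rw [Finset.sum_const, Nat.card_Icc]; simp
        have hVnn : 0 ≤ Vk ω := Finset.sum_nonneg fun t _ => (h2 t).1
        nlinarith [mul_le_mul_of_nonneg_left hSle hl, mul_nonneg hg0 hVnn]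
      · filter_upwards [hZcond_le, hYb] with ω h1 h2
        calc Y ω * (μ[Z|ℱ k]) ω ≤ Y ω * Real.exp (g * σ2 (k+1) ω) :=
              mul_le_mul_of_nonneg_left h1 h2.1
          _ = Real.exp (l * S ω - g * Vk ω) := by
              rw [hY, ← Real.exp_add]; ring_nf
    exact hfin.trans ih

lemma freedman_aux (hb : 0 < b)
    (hadapted : ∀ t, StronglyMeasurable[ℱ t] (X t))
    (hint : ∀ t, Integrable (X t) μ)
    (hmds : ∀ t, 1 ≤ t → μ[X t|ℱ (t - 1)] =ᵐ[μ] fun _ => (0 : ℝ))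
    (hbdd : ∀ t, ∀ᵐ ω ∂μ, |X t ω| ≤ b)
    (σ2 : ℕ → Ω → ℝ)
    (hσ2 : ∀ t, σ2 t = μ[fun ω' => (X t ω') ^ 2|ℱ (t - 1)])
    (n : ℕ) (a v : ℝ) (ha : 0 < a) (hv : 0 < v) :
    (μ {ω | a ≤ ∑ t ∈ Icc 1 n, X t ω ∧ (∑ t ∈ Icc 1 n, σ2 t ω) ≤ v}).toReal
      ≤ Real.exp (-(a ^ 2) / (2 * v + 2 * a * b / 3)) := by
  set D : ℝ := v + a * b / 3 with hDdef
  have hD : 0 < D := by positivity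
  set l : ℝ := a / D with hldef
  have hl : 0 < l := by positivity
  have h3D : 3 * D = 3 * v + a * b := by rw [hDdef]; ring
  have hlb : l * b < 3 := by
    rw [hldef, div_mul_eq_mul_div, div_lt_iff₀ hD]
    linarith
  set g : ℝ := l ^ 2 / (2 * (1 - l * b / 3)) with hgdef
  have h1 : 1 - l * b / 3 = v / D := by
    rw [hldef]
    field_simp
    linear_combination (3 * D) * hDdef
  have hgv : g = a ^ 2 / (2 * v * D) := by
    rw [hgdef, h1, hldef]
    field_simp
  have hg0 : 0 ≤ g := by rw [hgv]; positivity
  have key : -(l * a) + g * v = -(a ^ 2) / (2 * v + 2 * a * b / 3) := by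
    have h2D : 2 * v + 2 * a * b / 3 = 2 * D := by rw [hDdef]; ring
    rw [h2D, hgv, hldef]
    field_simp
    ring
  -- measurability
  have hXm : ∀ t, StronglyMeasurable[m0] (X t) := fun t => (hadapted t).mono (ℱ.le t)
  have hσm0 : ∀ t, StronglyMeasurable[m0] (σ2 t) := by
    intro t; rw [hσ2]; exact stronglyMeasurable_condExp.mono (ℱ.le _)
  have hSmeas : Measurable fun ω => ∑ t ∈ Icc 1 n, X t ω := by
    exact Finset.measurable_sum _ fun t _ => (hXm t).measurable
  have hVmeas : Measurable fun ω => ∑ t ∈ Icc 1 n, σ2 t ω := by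
    exact Finset.measurable_sum _ fun t _ => (hσm0 t).measurable
  have hA : MeasurableSet {ω | a ≤ ∑ t ∈ Icc 1 n, X t ω ∧ (∑ t ∈ Icc 1 n, σ2 t ω) ≤ v} := by
    have : {ω | a ≤ ∑ t ∈ Icc 1 n, X t ω ∧ (∑ t ∈ Icc 1 n, σ2 t ω) ≤ v}
        = {ω | a ≤ ∑ t ∈ Icc 1 n, X t ω} ∩ {ω | (∑ t ∈ Icc 1 n, σ2 t ω) ≤ v} := rfl
    rw [this]
    exact (measurableSet_le measurable_const hSmeas).inter
      (measurableSet_le hVmeas measurable_const)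
  set A := {ω | a ≤ ∑ t ∈ Icc 1 n, X t ω ∧ (∑ t ∈ Icc 1 n, σ2 t ω) ≤ v} with hAdef
  set F : Ω → ℝ := fun ω => Real.exp (l * (∑ t ∈ Icc 1 n, X t ω)
    - g * (∑ t ∈ Icc 1 n, σ2 t ω)) with hFdef
  have hFm : StronglyMeasurable[m0] F :=
    (((hSmeas.const_mul l).sub (hVmeas.const_mul g)).exp).stronglyMeasurable
  -- a.e. bounds for integrability
  have hσb : ∀ t, ∀ᵐ ω ∂μ, 0 ≤ σ2 t ω := by
    intro t
    rw [hσ2]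
    exact condExp_nonneg (Filter.Eventually.of_forall fun ω => sq_nonneg _)
  have hball : ∀ᵐ ω ∂μ, ∀ t, |X t ω| ≤ b := ae_all_iff.2 hbdd
  have hσall : ∀ᵐ ω ∂μ, ∀ t, 0 ≤ σ2 t ω := ae_all_iff.2 hσb
  have hFint : Integrable F μ := by
    refine Integrable.mono' (integrable_const (Real.exp (l * (n * b))))
      hFm.aestronglyMeasurable ?_
    filter_upwards [hball, hσall] with ω h1' h2'
    rw [Real.norm_eq_abs, abs_of_pos (Real.exp_pos _)]
    refine Real.exp_le_exp.2 ?_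
    have hSle : (∑ t ∈ Icc 1 n, X t ω) ≤ n * b := by
      calc (∑ t ∈ Icc 1 n, X t ω) ≤ ∑ t ∈ Icc 1 n, b :=
            Finset.sum_le_sum fun t _ => (abs_le.1 (h1' t)).2
        _ = n * b := by rw [Finset.sum_const, Nat.card_Icc]; simp
    have hVnn : 0 ≤ ∑ t ∈ Icc 1 n, σ2 t ω := Finset.sum_nonneg fun t _ => h2' t
    nlinarith [mul_le_mul_of_nonneg_left hSle hl.le, mul_nonneg hg0 hVnn]
  have hmgf : ∫ ω, F ω ∂μ ≤ 1 :=
    mgf_le μ ℱ X b hb hadapted hint hmds hbdd σ2 hσ2 l hl.le hlb n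
  have hmarkov : (μ A).toReal * Real.exp (l * a - g * v) ≤ ∫ ω, F ω ∂μ := by
    have h1' : (μ A).toReal * Real.exp (l * a - g * v)
        = ∫ _ in A, Real.exp (l * a - g * v) ∂μ := by
      rw [setIntegral_const]; simp [smul_eq_mul, Measure.real]
    rw [h1']
    have h2' : ∫ _ in A, Real.exp (l * a - g * v) ∂μ ≤ ∫ ω in A, F ω ∂μ := by
      refine setIntegral_mono_on (integrable_const _).integrableOn
        hFint.integrableOn hA ?_
      intro ω hω
      obtain ⟨hω1, hω2⟩ := hω
      refine Real.exp_le_exp.2 ?_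
      have e1 : l * a ≤ l * ∑ t ∈ Icc 1 n, X t ω := mul_le_mul_of_nonneg_left hω1 hl.le
      have e2 : g * (∑ t ∈ Icc 1 n, σ2 t ω) ≤ g * v := mul_le_mul_of_nonneg_left hω2 hg0
      linarith
    refine h2'.trans ?_
    exact setIntegral_le_integral hFint
      (Filter.Eventually.of_forall fun ω => (Real.exp_pos _).le)
  have hpos : 0 < Real.exp (l * a - g * v) := Real.exp_pos _
  have hfin : (μ A).toReal ≤ (Real.exp (l * a - g * v))⁻¹ := by
    rw [← one_div]
    exact (le_div_iff₀ hpos).2 (hmarkov.trans hmgf)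
  calc (μ A).toReal ≤ (Real.exp (l * a - g * v))⁻¹ := hfin
    _ = Real.exp (-(a ^ 2) / (2 * v + 2 * a * b / 3)) := by
        rw [← Real.exp_neg]
        congr 1
        linarith [key]

end

-- numeric lemmas
lemma log_32 : (2:ℝ)/5 ≤ Real.log (3/2) := by
  rw [Real.le_log_iff_exp_le (by norm_num)]
  have h5 : Real.exp (2/5) ^ 5 = Real.exp 2 := by
    rw [← Real.exp_nat_mul]; norm_num
  have h2 : Real.exp 2 = Real.exp 1 ^ 2 := by
    rw [← Real.exp_nat_mul]; norm_num
  have he := Real.exp_one_lt_d9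
  have hb : Real.exp (2/5) ^ 5 ≤ (3/2:ℝ) ^ 5 := by
    rw [h5, h2]
    calc Real.exp 1 ^ 2 ≤ (2.7182818286:ℝ) ^ 2 :=
          pow_le_pow_left₀ (Real.exp_pos 1).le he.le 2
      _ ≤ (3/2:ℝ) ^ 5 := by norm_num
  exact le_of_pow_le_pow_left₀ (by norm_num) (by norm_num) hb

lemma log_72 : (6:ℝ)/5 ≤ Real.log (7/2) := by
  rw [Real.le_log_iff_exp_le (by norm_num)]
  have h5 : Real.exp (6/5) ^ 5 = Real.exp 6 := by
    rw [← Real.exp_nat_mul]; norm_num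
  have h2 : Real.exp 6 = Real.exp 1 ^ 6 := by
    rw [← Real.exp_nat_mul]; norm_num
  have he := Real.exp_one_lt_d9
  have hb : Real.exp (6/5) ^ 5 ≤ (7/2:ℝ) ^ 5 := by
    rw [h5, h2]
    calc Real.exp 1 ^ 6 ≤ (2.7182818286:ℝ) ^ 6 :=
          pow_le_pow_left₀ (Real.exp_pos 1).le he.le 6
      _ ≤ (7/2:ℝ) ^ 5 := by norm_num
  exact le_of_pow_le_pow_left₀ (by norm_num) (by norm_num) hb

lemma log_3 : (1:ℝ) ≤ Real.log 3 := by
  rw [Real.le_log_iff_exp_le (by norm_num)]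
  have := Real.exp_one_lt_d9
  linarith


set_option maxHeartbeats 2000000 in
/-- Freedman's inequality in the form of Kakade–Tewari (Lemma 3): for a
martingale difference sequence bounded by `b` with conditional variance proxy
`V`, the deviation `max{2√V, 3b√log(1/δ)}·√log(1/δ)` holds except with
probability `4δ log n`. -/
theorem stmt_16 {Ω : Type*} {m0 : MeasurableSpace Ω} (μ : Measure Ω)
    [IsProbabilityMeasure μ]
    (ℱ : MeasureTheory.Filtration ℕ m0)
    (X : ℕ → Ω → ℝ) (n : ℕ) (hn : 3 ≤ n)
    (b δ : ℝ) (hb : 0 < b) (hδ : 0 < δ) (hδe : δ < Real.exp (-1))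
    (hadapted : ∀ t, StronglyMeasurable[ℱ t] (X t))
    (hint : ∀ t, Integrable (X t) μ)
    -- martingale difference sequence:
    (hmds : ∀ t, 1 ≤ t → μ[X t|ℱ (t - 1)] =ᵐ[μ] fun _ => (0 : ℝ))
    (hbdd : ∀ t, ∀ᵐ ω ∂μ, |X t ω| ≤ b)
    (V : Ω → ℝ)
    (hV : V =ᵐ[μ] fun ω =>
      ∑ t ∈ Finset.Icc 1 n, (μ[fun ω' => (X t ω') ^ 2|ℱ (t - 1)]) ω) :
    (μ {ω | max (2 * Real.sqrt (V ω)) (3 * b * Real.sqrt (Real.log (1 / δ)))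
          * Real.sqrt (Real.log (1 / δ))
        ≤ ∑ t ∈ Finset.Icc 1 n, X t ω}).toReal
      ≤ 4 * δ * Real.log n := by
  classical
  set L : ℝ := Real.log (1 / δ) with hLdef
  have hL1 : 1 < L := by
    rw [hLdef, Real.lt_log_iff_exp_lt (by positivity)]
    rw [lt_div_iff₀ hδ]
    have h2 := mul_lt_mul_of_pos_right hδe (Real.exp_pos 1)
    rw [Real.exp_neg] at h2
    calc Real.exp 1 * δ = δ * Real.exp 1 := mul_comm _ _
      _ < (Real.exp 1)⁻¹ * Real.exp 1 := h2
      _ = 1 := inv_mul_cancel₀ (Real.exp_pos 1).ne'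
  have hL0 : (0:ℝ) < L := by linarith
  have hδeq : Real.exp (-L) = δ := by
    rw [hLdef, one_div, Real.log_inv, neg_neg, Real.exp_log hδ]
  set σ2 : ℕ → Ω → ℝ := fun t => μ[fun ω' => (X t ω') ^ 2|ℱ (t - 1)] with hσ2def
  have hσ2 : ∀ t, σ2 t = μ[fun ω' => (X t ω') ^ 2|ℱ (t - 1)] := fun t => rfl
  -- geometric grid
  set v : ℕ → ℝ := fun j => 7 / 2 * b ^ 2 * L * (3 / 2) ^ j with hvdef
  have hv_pos : ∀ j, 0 < v j := fun j => by rw [hvdef]; positivity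
  have hv_ge : ∀ j, 7 / 2 * b ^ 2 * L ≤ v j := by
    intro j
    rw [hvdef]
    nlinarith [one_le_pow₀ (by norm_num : (1:ℝ) ≤ 3/2) (n := j),
      mul_pos (mul_pos (by norm_num : (0:ℝ) < 7/2) (pow_pos hb 2)) hL0]
  set m : ℕ := ⌈Real.log ((n:ℝ) / (7 / 2 * L)) / Real.log (3 / 2)⌉₊ with hmdef
  set aa : ℕ → ℝ := fun j => if j = 0 then 3 * b * L
    else 2 * Real.sqrt (v (j - 1) * L) with haadef
  set B : ℕ → Set Ω := fun j =>
    {ω | aa j ≤ ∑ t ∈ Icc 1 n, X t ω ∧ (∑ t ∈ Icc 1 n, σ2 t ω) ≤ v j} with hBdef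
  have hlog32 : (2:ℝ)/5 ≤ Real.log (3/2) := log_32
  have hlog32' : (0:ℝ) < Real.log (3/2) := lt_of_lt_of_le (by norm_num) hlog32
  have hn3 : (3:ℝ) ≤ (n:ℝ) := by exact_mod_cast hn
  have hlogn : 1 ≤ Real.log n :=
    log_3.trans (Real.log_le_log (by norm_num) hn3)
  -- each slab bound
  have hBj : ∀ j, (μ (B j)).toReal ≤ δ := by
    intro j
    have haj : 0 < aa j := by
      rw [haadef]
      rcases Nat.eq_zero_or_pos j with hj | hj
      · simp only [hj, if_pos rfl]; positivity
      · have : j ≠ 0 := by omega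
        simp only [this, if_false]
        have : 0 < v (j-1) * L := mul_pos (hv_pos _) hL0
        positivity
    have hfa := freedman_aux μ ℱ X b hb hadapted hint hmds hbdd σ2 hσ2 n
      (aa j) (v j) haj (hv_pos j)
    refine hfa.trans ?_
    rw [← hδeq]
    refine Real.exp_le_exp.2 ?_
    have hden : 0 < 2 * v j + 2 * aa j * b / 3 := by positivity
    have hkey : L * (2 * v j + 2 * aa j * b / 3) ≤ (aa j) ^ 2 := by
      rcases Nat.eq_zero_or_pos j with hj | hj
      · subst hj
        refine le_of_eq ?_
        simp only [haadef, if_pos rfl, hvdef, pow_zero]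
        ring
      · have hj0 : j ≠ 0 := by omega
        obtain ⟨k, rfl⟩ : ∃ k, j = k + 1 := ⟨j - 1, by omega⟩
        have hk1 : k + 1 - 1 = k := rfl
        simp only [haadef, if_neg (Nat.succ_ne_zero k), hk1]
        have hvkL : (0:ℝ) ≤ v k * L := le_of_lt (mul_pos (hv_pos k) hL0)
        have hsq : (2 * Real.sqrt (v k * L)) ^ 2 = 4 * (v k * L) := by
          rw [mul_pow, Real.sq_sqrt hvkL]; ring
        have hsucc : v (k + 1) = 3 / 2 * v k := by
          rw [hvdef]; simp only [pow_succ]; ring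
        have hbsqrt : b * Real.sqrt (v k * L) ≤ 3 / 4 * v k := by
          have e1 : b * Real.sqrt (v k * L) = Real.sqrt (b ^ 2 * (v k * L)) := by
            rw [Real.sqrt_mul (sq_nonneg b), Real.sqrt_sq hb.le]
          have e2 : b ^ 2 * (v k * L) ≤ (3 / 4 * v k) ^ 2 := by
            have h1 : b ^ 2 * L ≤ 2 / 7 * v k := by
              have := hv_ge k; nlinarith
            nlinarith [hv_pos k, sq_nonneg (v k), mul_pos (pow_pos hb 2) hL0]
          rw [e1]
          calc Real.sqrt (b ^ 2 * (v k * L)) ≤ Real.sqrt ((3 / 4 * v k) ^ 2) :=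
                Real.sqrt_le_sqrt e2
            _ = 3 / 4 * v k := Real.sqrt_sq (by positivity)
        rw [hsq, hsucc]
        nlinarith [hv_pos k, hL0]
    calc -(aa j) ^ 2 / (2 * v j + 2 * aa j * b / 3)
        ≤ -L := by
          rw [neg_div, neg_le_neg_iff, le_div_iff₀ hden]
          linarith
      _ = -L := rfl
  -- grid covers n b²
  have hratio_pos : (0:ℝ) < (n:ℝ) / (7 / 2 * L) := by positivity
  have hcover : (n:ℝ) * b ^ 2 ≤ v m := by
    have h1 : (n:ℝ) / (7 / 2 * L) ≤ (3 / 2) ^ m := by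
      rw [← Real.log_le_log_iff hratio_pos (by positivity), Real.log_pow]
      exact (div_le_iff₀ hlog32').1 (Nat.le_ceil _)
    have h2 := mul_le_mul_of_nonneg_left h1
      (show (0:ℝ) ≤ 7 / 2 * b ^ 2 * L by positivity)
    calc (n:ℝ) * b ^ 2 = 7 / 2 * b ^ 2 * L * ((n:ℝ) / (7 / 2 * L)) := by
          field_simp
      _ ≤ 7 / 2 * b ^ 2 * L * (3 / 2) ^ m := h2
      _ = v m := by rw [hvdef]
  -- count bound
  have hcount : (m:ℝ) + 1 ≤ 4 * Real.log n := by
    set x : ℝ := Real.log ((n:ℝ) / (7 / 2 * L)) / Real.log (3 / 2) with hxdef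
    by_cases hx : x ≤ 0
    · have : m = 0 := by rw [hmdef]; exact Nat.ceil_eq_zero.2 hx
      rw [this]
      push_cast
      linarith
    · push_neg at hx
      have hm1 : (m:ℝ) < x + 1 := by
        rw [hmdef]; exact Nat.ceil_lt_add_one hx.le
      have hLpos : (0:ℝ) < 7 / 2 * L := by positivity
      have hnum : Real.log ((n:ℝ) / (7 / 2 * L))
          = Real.log n - Real.log (7 / 2 * L) := by
        rw [Real.log_div (by positivity) (by positivity)]
      have hlog72L : 6 / 5 ≤ Real.log (7 / 2 * L) := by
        rw [Real.log_mul (by norm_num) (by positivity)]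
        have hlogL : 0 ≤ Real.log L := Real.log_nonneg hL1.le
        linarith [log_72]
      have hnum0 : 0 ≤ Real.log ((n:ℝ) / (7 / 2 * L)) := by
        by_contra h
        push_neg at h
        have : x < 0 := div_neg_of_neg_of_pos h hlog32'
        linarith
      have hxle : x ≤ Real.log ((n:ℝ) / (7 / 2 * L)) / (2 / 5) := by
        rw [hxdef]
        exact div_le_div_of_nonneg_left hnum0 (by norm_num) hlog32
      have hthis : x ≤ 5 / 2 * (Real.log n - 6 / 5) := by
        rw [hnum] at hxle
        have heq : (Real.log n - Real.log (7 / 2 * L)) / (2 / 5)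
            = 5 / 2 * (Real.log n - Real.log (7 / 2 * L)) := by ring
        rw [heq] at hxle
        linarith only [hxle, hlog72L]
      linarith only [hm1, hthis, hlogn]
  -- a.e. upper bound on Vf
  have hXm : ∀ t, StronglyMeasurable[m0] (X t) := fun t => (hadapted t).mono (ℱ.le t)
  have hX2int : ∀ t, Integrable (fun ω => (X t ω) ^ 2) μ := by
    intro t
    refine Integrable.mono' (integrable_const (b ^ 2))
      ((hXm t).measurable.pow_const 2).aestronglyMeasurable ?_
    filter_upwards [hbdd t] with ω hω
    rw [Real.norm_eq_abs, abs_of_nonneg (sq_nonneg _), ← sq_abs]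
    exact pow_le_pow_left₀ (abs_nonneg _) hω 2
  have hσb : ∀ t, ∀ᵐ ω ∂μ, σ2 t ω ≤ b ^ 2 := by
    intro t
    have h2 : σ2 t ≤ᵐ[μ] fun _ => b ^ 2 := by
      rw [hσ2]
      refine (condExp_mono (g := fun _ => b ^ 2) (hX2int t)
        (integrable_const _) ?_).trans ?_
      · filter_upwards [hbdd t] with ω hω
        rw [← sq_abs]; exact pow_le_pow_left₀ (abs_nonneg _) hω 2
      · rw [condExp_const (ℱ.le _)]
    exact h2
  have hVub : ∀ᵐ ω ∂μ, (∑ t ∈ Icc 1 n, σ2 t ω) ≤ (n:ℝ) * b ^ 2 := by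
    filter_upwards [ae_all_iff.2 hσb] with ω h
    calc (∑ t ∈ Icc 1 n, σ2 t ω) ≤ ∑ t ∈ Icc 1 n, b ^ 2 :=
          Finset.sum_le_sum fun t _ => h t
      _ = (n:ℝ) * b ^ 2 := by rw [Finset.sum_const, Nat.card_Icc]; simp
  -- inclusion
  have hsub : {ω | max (2 * Real.sqrt (V ω)) (3 * b * Real.sqrt L) * Real.sqrt L
        ≤ ∑ t ∈ Finset.Icc 1 n, X t ω}
      ≤ᵐ[μ] ⋃ j ∈ Finset.range (m + 1), B j := by
    filter_upwards [hV, hVub] with ω hVeq hub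
    intro hE
    have hVeq' : V ω = ∑ t ∈ Icc 1 n, σ2 t ω := hVeq
    by_cases h0 : (∑ t ∈ Icc 1 n, σ2 t ω) ≤ v 0
    · refine Set.mem_iUnion.2 ⟨0, Set.mem_iUnion.2 ⟨Finset.mem_range.2 (by omega), ?_, h0⟩⟩
      have step : 3 * b * Real.sqrt L * Real.sqrt L = 3 * b * L := by
        rw [mul_assoc, Real.mul_self_sqrt hL0.le]
      have := mul_le_mul_of_nonneg_right
        (le_max_right (2 * Real.sqrt (V ω)) (3 * b * Real.sqrt L))
        (Real.sqrt_nonneg L)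
      have haa0 : aa 0 = 3 * b * L := by simp [haadef]
      rw [haa0]
      calc 3 * b * L = 3 * b * Real.sqrt L * Real.sqrt L := step.symm
        _ ≤ max (2 * Real.sqrt (V ω)) (3 * b * Real.sqrt L) * Real.sqrt L := this
        _ ≤ ∑ t ∈ Icc 1 n, X t ω := hE
    · have hex : ∃ j, (∑ t ∈ Icc 1 n, σ2 t ω) ≤ v j := ⟨m, hub.trans hcover⟩
      set j := Nat.find hex with hjdef
      have hspec : (∑ t ∈ Icc 1 n, σ2 t ω) ≤ v j := Nat.find_spec hex
      have hjm : j ≤ m := Nat.find_le (hub.trans hcover)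
      have hj0 : j ≠ 0 := by
        intro h
        rw [h] at hspec
        exact h0 hspec
      have hjprev : ¬ (∑ t ∈ Icc 1 n, σ2 t ω) ≤ v (j - 1) :=
        Nat.find_min hex (by omega)
      push_neg at hjprev
      refine Set.mem_iUnion.2 ⟨j, Set.mem_iUnion.2 ⟨Finset.mem_range.2 (by omega), ?_, hspec⟩⟩
      have haaj : aa j = 2 * Real.sqrt (v (j - 1) * L) := by
        rw [haadef]; simp [hj0]
      rw [haaj]
      have hVpos : 0 ≤ V ω := by
        rw [hVeq']
        exact le_of_lt (lt_of_lt_of_le (hv_pos _) hjprev.le)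
      have hsle : Real.sqrt (v (j - 1) * L) ≤ Real.sqrt (V ω * L) := by
        refine Real.sqrt_le_sqrt ?_
        refine mul_le_mul_of_nonneg_right ?_ hL0.le
        rw [hVeq']
        exact hjprev.le
      have hsplit : Real.sqrt (V ω * L) = Real.sqrt (V ω) * Real.sqrt L :=
        Real.sqrt_mul hVpos L
      calc 2 * Real.sqrt (v (j - 1) * L) ≤ 2 * Real.sqrt (V ω * L) := by linarith
        _ = 2 * Real.sqrt (V ω) * Real.sqrt L := by rw [hsplit]; ring
        _ ≤ max (2 * Real.sqrt (V ω)) (3 * b * Real.sqrt L) * Real.sqrt L :=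
            mul_le_mul_of_nonneg_right
              (le_max_left _ _) (Real.sqrt_nonneg L)
        _ ≤ ∑ t ∈ Icc 1 n, X t ω := hE
  -- combine
  have hU : μ {ω | max (2 * Real.sqrt (V ω)) (3 * b * Real.sqrt L) * Real.sqrt L
        ≤ ∑ t ∈ Finset.Icc 1 n, X t ω}
      ≤ ∑ j ∈ Finset.range (m + 1), μ (B j) :=
    (measure_mono_ae hsub).trans (measure_biUnion_finset_le _ _)
  have hne : ∀ j ∈ Finset.range (m + 1), μ (B j) ≠ ⊤ :=
    fun j _ => (measure_lt_top μ _).ne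
  calc (μ {ω | max (2 * Real.sqrt (V ω)) (3 * b * Real.sqrt L) * Real.sqrt L
        ≤ ∑ t ∈ Finset.Icc 1 n, X t ω}).toReal
      ≤ (∑ j ∈ Finset.range (m + 1), μ (B j)).toReal := by
        refine ENNReal.toReal_mono ?_ hU
        exact (ENNReal.sum_lt_top.2 fun j hj => (measure_lt_top μ _)).ne
    _ = ∑ j ∈ Finset.range (m + 1), (μ (B j)).toReal := ENNReal.toReal_sum hne
    _ ≤ ∑ _j ∈ Finset.range (m + 1), δ := Finset.sum_le_sum fun j _ => hBj j
    _ = ((m:ℝ) + 1) * δ := by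
        rw [Finset.sum_const, Finset.card_range]
        push_cast
        ring
    _ ≤ 4 * δ * Real.log n := by nlinarith [hδ.le, hcount, hδ]
end

section
/- Let x_1, ..., x_n ∈ ℝ^d with ‖x_t‖₂ ≤ B, let ε > 0 and define A_{t,ε} = ε I + Σ_{i=1}^t x_i x_i^⊤. Then Σ_{t=1}^n x_t^⊤ A_{t,ε}^{-1} x_t ≤ d log(B² n / ε + 1). -/
open Finset Matrix

/-- The elliptic potential lemma (Lemma 11 of Hazan–Agarwal–Kale):
`∑_{t=1}^n ‖x_t‖²_{A_{t,ε}⁻¹} ≤ d log(B²n/ε + 1)` where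
`A_{t,ε} = εI + ∑_{i≤t} x_i x_iᵀ`. -/
theorem stmt_18 {d : ℕ} (x : ℕ → Fin d → ℝ) (n : ℕ)
    (B ε : ℝ) (hB : 0 < B) (hε : 0 < ε)
    (hx : ∀ t, Real.sqrt (∑ j, x t j ^ 2) ≤ B)
    (A : ℕ → Matrix (Fin d) (Fin d) ℝ)
    (hA : ∀ t, A t = ε • (1 : Matrix (Fin d) (Fin d) ℝ)
      + ∑ i ∈ Finset.Icc 1 t, vecMulVec (x i) (x i)) :
    ∑ t ∈ Finset.Icc 1 n, x t ⬝ᵥ ((A t)⁻¹ *ᵥ x t)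
      ≤ (d : ℝ) * Real.log (B ^ 2 * n / ε + 1) := by
  -- norm bound
  have hxB : ∀ t, ∑ j, x t j ^ 2 ≤ B ^ 2 := by
    intro t
    have h1 : 0 ≤ ∑ j, x t j ^ 2 := Finset.sum_nonneg fun j _ => sq_nonneg _
    calc ∑ j, x t j ^ 2 = (Real.sqrt (∑ j, x t j ^ 2)) ^ 2 := (Real.sq_sqrt h1).symm
    _ ≤ B ^ 2 := pow_le_pow_left₀ (Real.sqrt_nonneg _) (hx t) 2
  -- rank one matrices are PSD
  have hPSD : ∀ u : Fin d → ℝ, (vecMulVec u u).PosSemidef := by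
    intro u
    have h := Matrix.posSemidef_conjTranspose_mul_self (Matrix.replicateRow Unit u)
    rwa [Matrix.conjTranspose_replicateRow, star_trivial, ← Matrix.vecMulVec_eq] at h
  -- A t is positive definite
  have hεI : (ε • (1 : Matrix (Fin d) (Fin d) ℝ)).PosDef := by
    rw [Matrix.smul_one_eq_diagonal]
    exact Matrix.posDef_diagonal_iff.2 fun _ => hε
  have hApos : ∀ t, (A t).PosDef := by
    intro t
    rw [hA t]
    refine hεI.add_posSemidef ?_
    refine Finset.sum_induction _ _ (fun a b ha hb => ha.add hb) .zero fun i _ => hPSD (x i)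
  have hdet : ∀ t, 0 < (A t).det := fun t => (hApos t).det_pos
  -- determinant recursion
  have key : ∀ i : ℕ, x (i+1) ⬝ᵥ ((A (i+1))⁻¹ *ᵥ x (i+1))
      ≤ Real.log ((A (i+1)).det) - Real.log ((A i).det) := by
    intro i
    set u := x (i+1) with hu
    set s := u ⬝ᵥ ((A (i+1))⁻¹ *ᵥ u) with hs
    have hstep : A (i+1) = A i + vecMulVec u u := by
      rw [hA, hA, Finset.sum_Icc_succ_top (Nat.one_le_iff_ne_zero.2 (Nat.succ_ne_zero i)), add_assoc]
    have hdetrec : (A i).det = (A (i+1)).det * (1 - s) := by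
      have hUnit : IsUnit (A (i+1)).det := (hdet (i+1)).ne'.isUnit
      have h1 : A i = A (i+1) + Matrix.replicateCol Unit (-u) * Matrix.replicateRow Unit u := by
        rw [hstep, ← Matrix.vecMulVec_eq]
        have : vecMulVec (-u) u = -vecMulVec u u := by
          ext a b; simp [Matrix.vecMulVec_apply]
        rw [this]; abel
      rw [h1, Matrix.det_add_replicateCol_mul_replicateRow hUnit]
      congr 1
      rw [Matrix.det_unique]
      have : (Matrix.replicateRow Unit u * (A (i+1))⁻¹ * Matrix.replicateCol Unit (-u)) = 
          Matrix.replicateRow Unit u * Matrix.replicateCol Unit ((A (i+1))⁻¹ *ᵥ (-u)) := by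
        rw [Matrix.replicateCol_mulVec, Matrix.mul_assoc]
      rw [Matrix.add_apply, this, Matrix.replicateRow_mul_replicateCol_apply]
      rw [Matrix.one_apply_eq, Matrix.mulVec_neg, dotProduct_neg, hs]
      ring
    -- s = 1 - r
    have hr : (0:ℝ) < (A i).det / (A (i+1)).det := div_pos (hdet i) (hdet (i+1))
    have hseq : s = 1 - (A i).det / (A (i+1)).det := by
      have h2 : (A (i+1)).det * (1-s) / (A (i+1)).det = 1 - s :=
        mul_div_cancel_left₀ _ (hdet (i+1)).ne'
      rw [hdetrec, h2]
      ring
    have hlog := Real.log_le_sub_one_of_pos hr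
    rw [Real.log_div (hdet i).ne' (hdet (i+1)).ne'] at hlog
    rw [hseq]
    linarith
  -- telescoping
  have htel : ∑ t ∈ Finset.Icc 1 n, x t ⬝ᵥ ((A t)⁻¹ *ᵥ x t)
      ≤ Real.log ((A n).det) - Real.log ((A 0).det) := by
    have hre : ∑ t ∈ Finset.Icc 1 n, x t ⬝ᵥ ((A t)⁻¹ *ᵥ x t)
        = ∑ i ∈ Finset.range n, x (i+1) ⬝ᵥ ((A (i+1))⁻¹ *ᵥ x (i+1)) := by
      rw [← Finset.Ico_add_one_right_eq_Icc, Finset.sum_Ico_eq_sum_range]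
      simp [add_comm 1]
    rw [hre, ← Finset.sum_range_sub (fun t => Real.log ((A t).det)) n]
    exact Finset.sum_le_sum fun i _ => key i
  -- value at 0
  have hA0 : Real.log ((A 0).det) = d * Real.log ε := by
    have : A 0 = ε • (1 : Matrix (Fin d) (Fin d) ℝ) := by simp [hA 0]
    rw [this, Matrix.det_smul, Matrix.det_one, mul_one, Real.log_pow]
    simp
  -- eigenvalue bound at n
  have hH : (A n).IsHermitian := (hApos n).isHermitian
  have heig : ∀ i, hH.eigenvalues i ≤ ε + B ^ 2 * n := by
    intro i
    set v : Fin d → ℝ := ⇑(hH.eigenvectorBasis i) with hv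
    have hnorm : ∑ j, v j ^ 2 = 1 := by
      have h1 : ‖hH.eigenvectorBasis i‖ = 1 := hH.eigenvectorBasis.orthonormal.1 i
      have h2 : ‖hH.eigenvectorBasis i‖ = Real.sqrt (∑ j, v j ^ 2) := by
        rw [EuclideanSpace.norm_eq]
        congr 1
        simp [hv, sq_abs]
      rw [h2] at h1
      have := congrArg (· ^ 2) h1
      simpa [Real.sq_sqrt (Finset.sum_nonneg fun j _ => sq_nonneg (v j))] using this
    have hmv : A n *ᵥ v = hH.eigenvalues i • v := hH.mulVec_eigenvectorBasis i
    have hvAv : v ⬝ᵥ (A n *ᵥ v) = hH.eigenvalues i := by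
      rw [hmv, dotProduct_smul]
      simp only [smul_eq_mul]
      have : v ⬝ᵥ v = ∑ j, v j ^ 2 := by simp [dotProduct, sq]
      rw [this, hnorm, mul_one]
    have hexp : v ⬝ᵥ (A n *ᵥ v) = ε * (∑ j, v j ^ 2) + ∑ t ∈ Finset.Icc 1 n, (x t ⬝ᵥ v) ^ 2 := by
      rw [hA n, Matrix.add_mulVec, dotProduct_add, Matrix.smul_mulVec, Matrix.one_mulVec]
      congr 1
      · rw [dotProduct_smul]
        simp only [smul_eq_mul]
        congr 1
        simp [dotProduct, sq]
      · have hsm : (∑ i ∈ Finset.Icc 1 n, vecMulVec (x i) (x i)) *ᵥ v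
            = ∑ i ∈ Finset.Icc 1 n, (vecMulVec (x i) (x i)) *ᵥ v := by
          ext j
          simp only [Matrix.mulVec, dotProduct, Finset.sum_apply, Matrix.sum_apply,
            Finset.sum_mul]
          rw [Finset.sum_comm]
        rw [hsm]
        have hds : v ⬝ᵥ ∑ i ∈ Finset.Icc 1 n, vecMulVec (x i) (x i) *ᵥ v
            = ∑ i ∈ Finset.Icc 1 n, v ⬝ᵥ (vecMulVec (x i) (x i) *ᵥ v) := by
          simp only [dotProduct, Finset.sum_apply, Finset.mul_sum]
          rw [Finset.sum_comm]
        rw [hds]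
        refine Finset.sum_congr rfl fun t _ => ?_
        have : vecMulVec (x t) (x t) *ᵥ v = (x t ⬝ᵥ v) • x t := by
          ext a
          simp only [Matrix.mulVec, Matrix.vecMulVec_apply, dotProduct, Pi.smul_apply,
            smul_eq_mul]
          rw [Finset.sum_mul]
          exact Finset.sum_congr rfl fun j _ => by ring
        rw [this, dotProduct_smul]
        simp only [smul_eq_mul]
        rw [sq, dotProduct_comm]
    have hCS : ∀ t, (x t ⬝ᵥ v) ^ 2 ≤ B ^ 2 := by
      intro t
      have h1 : (∑ j, x t j * v j) ^ 2 ≤ (∑ j, x t j ^ 2) * ∑ j, v j ^ 2 :=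
        Finset.sum_mul_sq_le_sq_mul_sq _ _ _
      rw [hnorm, mul_one] at h1
      exact h1.trans (hxB t)
    have hsum : ∑ t ∈ Finset.Icc 1 n, (x t ⬝ᵥ v) ^ 2 ≤ B ^ 2 * n := by
      calc ∑ t ∈ Finset.Icc 1 n, (x t ⬝ᵥ v) ^ 2 ≤ ∑ t ∈ Finset.Icc 1 n, B ^ 2 :=
        Finset.sum_le_sum fun t _ => hCS t
      _ = B ^ 2 * n := by simp [Nat.card_Icc, mul_comm]
    rw [← hvAv, hexp, hnorm, mul_one]
    linarith
  have hdetn : (A n).det ≤ (ε + B ^ 2 * n) ^ d := by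
    have := hH.det_eq_prod_eigenvalues
    rw [this]
    calc ∏ i, hH.eigenvalues i ≤ ∏ i : Fin d, (ε + B ^ 2 * n) := by
          refine Finset.prod_le_prod (fun i _ => le_of_lt ((hApos n).eigenvalues_pos i)) fun i _ => heig i
    _ = (ε + B ^ 2 * n) ^ d := by simp
  -- conclude
  have hpos : (0:ℝ) < ε + B ^ 2 * n := by positivity
  have hlogn : Real.log ((A n).det) ≤ d * Real.log (ε + B ^ 2 * n) := by
    calc Real.log ((A n).det) ≤ Real.log ((ε + B ^ 2 * n) ^ d) :=
      Real.log_le_log (hdet n) hdetn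
    _ = d * Real.log (ε + B ^ 2 * n) := by rw [Real.log_pow]
  have hfinal : (d:ℝ) * Real.log (ε + B ^ 2 * n) - d * Real.log ε
      = d * Real.log (B ^ 2 * n / ε + 1) := by
    rw [← mul_sub, ← Real.log_div hpos.ne' hε.ne']
    congr 2
    field_simp
    ring
  calc ∑ t ∈ Finset.Icc 1 n, x t ⬝ᵥ ((A t)⁻¹ *ᵥ x t)
      ≤ Real.log ((A n).det) - Real.log ((A 0).det) := htel
  _ ≤ d * Real.log (ε + B ^ 2 * n) - d * Real.log ε := by rw [hA0]; linarith
  _ = d * Real.log (B ^ 2 * n / ε + 1) := hfinal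
end
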